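/- If all entries of a one-dimensional array A of length n are strictly positive, then the optimal maximum load for partitioning A into m contiguous intervals satisfies L* ≤ (sum_i A[i]/m) · (1 + Δ·m/n), where Δ = (max_i A[i])/(min_i A[i]). -/

import Mathlib

/-- Optimal maximum interval load for partitioning the length-`n` prefix of the
array `f` into `k` contiguous (possibly empty) intervals. -/
noncomputable def opt1D (f : ℕ → ℝ) (n k : ℕ) : ℝ :=
  sInf {L | ∃ c : ℕ → ℕ, Monotone c ∧ c 0 = 0 ∧ c k = n ∧
    L = ⨆ j : Fin k, ∑ i ∈ Finset.Ico (c j.1) (c (j.1 + 1)), f i}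

/-- if all entries of `A` (on its domain of length `n`) are strictly
positive, the optimal maximum load for partitioning into `m` contiguous intervals
is at most `((∑ A)/m) · (1 + Δ·m/n)` where `Δ = (max A)/(min A)`. -/
theorem stmt_2 (n m : ℕ) (hn : 0 < n) (hm : 0 < m) (A : ℕ → ℝ)
    (hA : ∀ i < n, 0 < A i) :
    opt1D A n m ≤ ((∑ i ∈ Finset.range n, A i) / m) *
      (1 + ((Finset.range n).sup' (Finset.nonempty_range_iff.mpr hn.ne') A /
            (Finset.range n).inf' (Finset.nonempty_range_iff.mpr hn.ne') A) * m / n) := by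
  classical
  set S := ∑ i ∈ Finset.range n, A i with hS
  set Mx := (Finset.range n).sup' (Finset.nonempty_range_iff.mpr hn.ne') A with hMxdef
  set mn := (Finset.range n).inf' (Finset.nonempty_range_iff.mpr hn.ne') A with hmndef
  have hmn_pos : 0 < mn := by
    obtain ⟨i, hi, hie⟩ := Finset.exists_mem_eq_inf' (Finset.nonempty_range_iff.mpr hn.ne') A
    rw [hmndef, hie]; exact hA i (Finset.mem_range.mp hi)
  have hMx_pos : 0 < Mx := by
    have h1 : mn ≤ A 0 := Finset.inf'_le A (Finset.mem_range.mpr hn)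
    have h2 : A 0 ≤ Mx := Finset.le_sup' A (Finset.mem_range.mpr hn)
    linarith
  have hMx_ub : ∀ i < n, A i ≤ Mx := fun i hi => Finset.le_sup' A (Finset.mem_range.mpr hi)
  have hnmS : (n : ℝ) * mn ≤ S := by
    have := Finset.card_nsmul_le_sum (Finset.range n) A mn
      (fun i hi => Finset.inf'_le A hi)
    simpa [nsmul_eq_mul] using this
  have hS_pos : 0 < S := lt_of_lt_of_le (by positivity) hnmS
  have hm0 : (0:ℝ) < m := by exact_mod_cast hm
  have hn0 : (0:ℝ) < n := by exact_mod_cast hn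
  set P : ℕ → ℝ := fun t => ∑ i ∈ Finset.range t, A i with hP
  have hPn : P n = S := rfl
  have hex : ∀ j : ℕ, j < m → ∃ t, (j:ℝ) * S / m ≤ P t := by
    intro j hj
    refine ⟨n, ?_⟩
    rw [hPn]
    rw [div_le_iff₀ hm0]
    have : (j:ℝ) ≤ m := by exact_mod_cast hj.le
    nlinarith
  -- the cut points
  set c : ℕ → ℕ := fun j => if h : j < m then Nat.find (hex j h) else n with hc
  have hcn : ∀ j, c j ≤ n := by
    intro j
    by_cases h : j < m
    · simp only [hc, dif_pos h]
      apply Nat.find_le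
      rw [hPn, div_le_iff₀ hm0]
      have : (j:ℝ) ≤ m := by exact_mod_cast h.le
      nlinarith
    · simp [hc, dif_neg h]
  have hcspec : ∀ j (h : j < m), (j:ℝ) * S / m ≤ P (c j) := by
    intro j h
    simp only [hc, dif_pos h]
    exact Nat.find_spec (hex j h)
  have hcmin : ∀ j (h : j < m) t, t < c j → ¬ ((j:ℝ) * S / m ≤ P t) := by
    intro j h t ht
    simp only [hc, dif_pos h] at ht
    exact Nat.find_min (hex j h) ht
  have hcmono : Monotone c := by
    intro j j' hjj
    by_cases h' : j' < m
    · have h : j < m := lt_of_le_of_lt hjj h'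
      simp only [hc, dif_pos h, dif_pos h']
      apply Nat.find_le
      have hsp := Nat.find_spec (hex j' h')
      refine le_trans ?_ hsp
      gcongr
    · simp only [hc, dif_neg h']
      exact hcn j
  have hc0 : c 0 = 0 := by
    simp only [hc, dif_pos hm]
    rw [Nat.find_eq_zero]
    simp [hP]
  have hcm : c m = n := by simp [hc]
  -- the candidate value
  set L : ℝ := ⨆ j : Fin m, ∑ i ∈ Finset.Ico (c j.1) (c (j.1 + 1)), A i with hL
  have hne : Nonempty (Fin m) := ⟨⟨0, hm⟩⟩
  -- each interval load is bounded
  have hload : ∀ j : Fin m, ∑ i ∈ Finset.Ico (c j.1) (c (j.1 + 1)), A i ≤ S / m + Mx := by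
    intro j
    have hsum : ∑ i ∈ Finset.Ico (c j.1) (c (j.1 + 1)), A i = P (c (j.1+1)) - P (c j.1) :=
      Finset.sum_Ico_eq_sub A (hcmono (Nat.le_succ _))
    rw [hsum]
    have hlow : (j.1:ℝ) * S / m ≤ P (c j.1) := hcspec j.1 j.2
    by_cases hjm : j.1 + 1 = m
    · -- last interval
      have : c (j.1 + 1) = n := by rw [hjm, hcm]
      rw [this, hPn]
      have hj1 : ((j.1:ℝ) + 1) = (m:ℝ) := by exact_mod_cast hjm
      have hx : (j.1:ℝ) * S / m = S - S / m := by
        rw [eq_sub_iff_add_eq, ← add_div, div_eq_iff hm0.ne']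
        linear_combination S * hj1
      linarith
    · have hj1m : j.1 + 1 < m := lt_of_le_of_ne j.2 hjm
      rcases Nat.eq_zero_or_pos (c (j.1 + 1)) with h0 | hpos
      · have hcj0 : c j.1 = 0 := Nat.le_zero.mp (h0 ▸ hcmono (Nat.le_succ _))
        rw [h0, hcj0]
        simp [hP]
        positivity
      · obtain ⟨t, ht⟩ := Nat.exists_eq_succ_of_ne_zero hpos.ne'
        have htlt : t < c (j.1 + 1) := ht ▸ Nat.lt_succ_self t
        have hub := hcmin (j.1+1) hj1m t htlt
        push_neg at hub
        have hPt1 : P (t+1) = P t + A t := by simp [hP, Finset.sum_range_succ]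
        have htn : t < n := lt_of_lt_of_le htlt (hcn _)
        have hAt : A t ≤ Mx := hMx_ub t htn
        rw [ht, hPt1]
        have hcast : ((j.1:ℝ) + 1) * S / m = (j.1:ℝ) * S / m + S / m := by ring
        have : ((j.1 + 1 : ℕ):ℝ) = (j.1:ℝ) + 1 := by push_cast; ring
        rw [this] at hub
        linarith
  have hLle : L ≤ S / m + Mx := ciSup_le hload
  -- L is in the set
  have hmem : L ∈ {L | ∃ c : ℕ → ℕ, Monotone c ∧ c 0 = 0 ∧ c m = n ∧
      L = ⨆ j : Fin m, ∑ i ∈ Finset.Ico (c j.1) (c (j.1 + 1)), A i} :=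
    ⟨c, hcmono, hc0, hcm, rfl⟩
  -- the set is bounded below by 0
  have hbdd : BddBelow {L | ∃ c : ℕ → ℕ, Monotone c ∧ c 0 = 0 ∧ c m = n ∧
      L = ⨆ j : Fin m, ∑ i ∈ Finset.Ico (c j.1) (c (j.1 + 1)), A i} := by
    refine ⟨0, ?_⟩
    rintro L' ⟨d, hd, hd0, hdm, rfl⟩
    have hterm : 0 ≤ ∑ i ∈ Finset.Ico (d 0) (d (0 + 1)), A i := by
      apply Finset.sum_nonneg
      intro i hi
      have hi2 := Finset.mem_Ico.mp hi
      have : i < n := lt_of_lt_of_le hi2.2 (hdm ▸ hd hm)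
      exact (hA i this).le
    exact le_trans hterm (le_ciSup (f := fun j : Fin m => ∑ i ∈ Finset.Ico (d j.1) (d (j.1 + 1)), A i) (Set.finite_range _).bddAbove (⟨0, hm⟩ : Fin m))
  have hopt : opt1D A n m ≤ L := csInf_le hbdd hmem
  refine le_trans hopt (le_trans hLle ?_)
  -- final arithmetic
  rw [mul_add, mul_one]
  have hx : S / m * (Mx / mn * m / n) = S * Mx / (mn * n) := by
    field_simp
  have key : Mx ≤ S * Mx / (mn * n) := by
    rw [le_div_iff₀ (by positivity : (0:ℝ) < mn * n)]
    nlinarith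
  linarith [hx ▸ key]
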